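/- Let P(z) = Σ_{k=0}^n p_k z^k be a complex polynomial of degree at most n. Then sup_{|z|≤1} |P'(z)| ≤ n · sup_{|z|≤1} |P(z)|. -/

import Mathlib

open Polynomial Metric Set Complex

private lemma msum_pos {s : Multiset ℝ} (h : ∀ x ∈ s, 0 < x) (h2 : s ≠ 0) : 0 < s.sum := by
  obtain ⟨a, ha⟩ := Multiset.exists_mem_of_ne_zero h2
  rw [← Multiset.cons_erase ha, Multiset.sum_cons]
  have : 0 ≤ (s.erase a).sum :=
    Multiset.sum_nonneg fun x hx => (h x (Multiset.mem_of_mem_erase hx)).le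
  linarith [h a ha]

private lemma maxmod {f : ℂ → ℂ} (hf : Differentiable ℂ f) {C : ℝ}
    (h : ∀ z : ℂ, ‖z‖ = 1 → ‖f z‖ ≤ C) : ∀ z ∈ closedBall (0:ℂ) 1, ‖f z‖ ≤ C := by
  intro z hz
  apply Complex.norm_le_of_forall_mem_frontier_norm_le (isBounded_closedBall (x := (0:ℂ)) (r := 1))
    hf.diffContOnCl
  · intro w hw
    rw [frontier_closedBall (0:ℂ) one_ne_zero] at hw
    exact h w (mem_sphere_zero_iff_norm.mp hw)
  · rwa [closure_closedBall]

private lemma re_div_pos {z r : ℂ} (hr : ‖r‖ < 1) (hz : 1 ≤ ‖z‖) : 0 < (z / (z - r)).re := by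
  have hzr : z - r ≠ 0 := by
    intro h
    rw [sub_eq_zero] at h
    rw [h] at hz; linarith
  have h1 : (z * (starRingEnd ℂ) (z - r)).re > 0 := by
    have : z * (starRingEnd ℂ) (z - r) = ↑(normSq z) - z * (starRingEnd ℂ) r := by
      rw [map_sub, mul_sub, Complex.mul_conj]
    rw [this]
    have h2 : (z * (starRingEnd ℂ) r).re ≤ ‖z‖ * ‖r‖ := by
      calc (z * (starRingEnd ℂ) r).re ≤ ‖z * (starRingEnd ℂ) r‖ :=
            Complex.re_le_norm _
        _ = ‖z‖ * ‖r‖ := by rw [norm_mul, Complex.norm_conj]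
    have h3 : ‖z‖ * ‖r‖ < ‖z‖ * ‖z‖ := by nlinarith
    have h4 : normSq z = ‖z‖ * ‖z‖ := by rw [Complex.normSq_eq_norm_sq]; ring
    simp only [Complex.sub_re, Complex.ofReal_re]
    nlinarith
  rw [div_eq_mul_inv, Complex.inv_def]
  have : z * ((starRingEnd ℂ) (z - r) * ((normSq (z - r))⁻¹ : ℝ)) =
      (z * (starRingEnd ℂ) (z - r)) * ((normSq (z - r))⁻¹ : ℝ) := by ring
  rw [this]
  have h5 : 0 < (normSq (z - r))⁻¹ := inv_pos.mpr (normSq_pos.mpr hzr)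
  rw [Complex.mul_re]
  simp only [Complex.ofReal_re, Complex.ofReal_im, mul_zero, sub_zero]
  positivity

private lemma deriv_ne_zero_outside (R : Polynomial ℂ) (hdeg : 1 ≤ R.natDegree)
    (hroots : ∀ r ∈ R.roots, ‖r‖ < 1) {z : ℂ} (hz : 1 ≤ ‖z‖) :
    (Polynomial.derivative R).eval z ≠ 0 := by
  classical
  have hR0 : R ≠ 0 := fun h => by simp [h] at hdeg
  have hcard : R.roots.card = R.natDegree :=
    Polynomial.splits_iff_card_roots.mp (IsAlgClosed.splits R)
  have hlc : R.leadingCoeff ≠ 0 := Polynomial.leadingCoeff_ne_zero.mpr hR0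
  set F : Polynomial ℂ := (R.roots.map fun a => Polynomial.X - Polynomial.C a).prod with hFdef
  have hfac : R = Polynomial.C R.leadingCoeff * F :=
    (Polynomial.C_leadingCoeff_mul_prod_multiset_X_sub_C hcard).symm
  have hne : ∀ r ∈ R.roots, z - r ≠ 0 := by
    intro r hr h
    rw [sub_eq_zero] at h
    have := hroots r hr
    rw [← h] at this
    linarith
  have hFz : F.eval z = (R.roots.map fun r => z - r).prod := by
    rw [hFdef, Polynomial.eval_multiset_prod, Multiset.map_map]
    congr 1
    simp [Function.comp]
  have hFz0 : F.eval z ≠ 0 := by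
    rw [hFz]
    apply Multiset.prod_ne_zero
    intro h0
    obtain ⟨r, hr, hr0⟩ := Multiset.mem_map.mp h0
    exact hne r hr hr0
  -- the per-root cofactor
  set G : ℂ → ℂ := fun r => (((R.roots.erase r).map fun a => Polynomial.X - Polynomial.C a).prod).eval z
    with hGdef
  have hterm : ∀ r ∈ R.roots, G r = F.eval z * (z - r)⁻¹ := by
    intro r hr
    have hinj : Function.Injective (fun a : ℂ => z - a) := by
      intro a b h
      have : z - a = z - b := h
      linear_combination -this
    have hGr : G r = ((R.roots.erase r).map fun a => z - a).prod := by
      simp only [hGdef, Polynomial.eval_multiset_prod, Multiset.map_map]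
      congr 1
      simp [Function.comp]
    have herase : (R.roots.erase r).map (fun a : ℂ => z - a)
        = (R.roots.map fun a : ℂ => z - a).erase (z - r) :=
      (Multiset.map_erase _ hinj r _)
    have hmem : z - r ∈ R.roots.map fun a : ℂ => z - a := Multiset.mem_map_of_mem _ hr
    have hprod : (z - r) * ((R.roots.map fun a : ℂ => z - a).erase (z - r)).prod
        = (R.roots.map fun a : ℂ => z - a).prod := Multiset.prod_erase hmem
    rw [hGr, herase, ← hFz] at *
    field_simp [hne r hr]
    linear_combination hprod
  -- derivative of F evaluated at z
  have hdF : (Polynomial.derivative F).eval z = (R.roots.map G).sum := by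
    rw [hFdef, Polynomial.derivative_prod]
    have := map_multiset_sum (Polynomial.evalRingHom z)
      ((R.roots.map fun i => ((R.roots.erase i).map fun a => Polynomial.X - Polynomial.C a).prod
        * Polynomial.derivative (Polynomial.X - Polynomial.C i)))
    simp only [Polynomial.coe_evalRingHom] at this
    rw [this, Multiset.map_map]
    congr 1
    apply Multiset.map_congr rfl
    intro r _
    simp [hGdef]
  intro hcon
  -- reduce to sum of G = 0
  have hsum : (R.roots.map G).sum = 0 := by
    rw [hfac] at hcon
    rw [Polynomial.derivative_C_mul] at hcon
    simp only [Polynomial.eval_mul, Polynomial.eval_C] at hcon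
    rcases mul_eq_zero.mp hcon with h | h
    · exact absurd h hlc
    · rw [← hdF]; exact h
  -- multiply by z * conj (F z)
  set c : ℝ := Complex.normSq (F.eval z) with hc
  have hsum2 : (R.roots.map fun r => (c : ℂ) * (z / (z - r))).sum = 0 := by
    have h1 : (R.roots.map fun r => (z * (starRingEnd ℂ) (F.eval z)) * G r).sum
        = (z * (starRingEnd ℂ) (F.eval z)) * (R.roots.map G).sum := by
      rw [← Multiset.sum_map_mul_left]
    have h2 : (R.roots.map fun r => (z * (starRingEnd ℂ) (F.eval z)) * G r).sum
        = (R.roots.map fun r => (c : ℂ) * (z / (z - r))).sum := by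
      apply congrArg
      apply Multiset.map_congr rfl
      intro r hr
      rw [hterm r hr, hc]
      rw [← Complex.mul_conj (F.eval z)]
      field_simp
    rw [← h2, h1, hsum, mul_zero]
  -- real parts
  have hre : ((R.roots.map fun r => (c : ℝ) * (z / (z - r)).re).sum) = 0 := by
    have h3 : (R.roots.map fun r => (c:ℂ) * (z/(z-r))).sum.re
        = ((R.roots.map fun r => (c:ℂ) * (z/(z-r))).map Complex.re).sum :=
      map_multiset_sum Complex.reAddGroupHom _
    rw [hsum2, Multiset.map_map] at h3
    simp only [Complex.zero_re] at h3
    have h4 : (R.roots.map fun r => (c : ℝ) * (z / (z - r)).re)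
        = (R.roots.map (Complex.re ∘ fun r => (c:ℂ) * (z/(z-r)))) :=
      Multiset.map_congr rfl (fun r _ => by simp)
    rw [h4]
    exact h3.symm
  have hpos : 0 < ((R.roots.map fun r => (c : ℝ) * (z / (z - r)).re).sum) := by
    apply msum_pos
    · intro x hx
      obtain ⟨r, hr, rfl⟩ := Multiset.mem_map.mp hx
      have hcpos : 0 < c := Complex.normSq_pos.mpr hFz0
      exact mul_pos hcpos (re_div_pos (hroots r hr) hz)
    · rw [Ne, Multiset.map_eq_zero]
      intro h0
      rw [h0] at hcard
      simp at hcard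
      omega
  rw [hre] at hpos
  exact lt_irrefl 0 hpos

private lemma growth (n : ℕ) (P : Polynomial ℂ) (hP : P.natDegree ≤ n) {M : ℝ}
    (hM : ∀ w : ℂ, ‖w‖ ≤ 1 → ‖P.eval w‖ ≤ M) {z : ℂ} (hz : 1 ≤ ‖z‖) :
    ‖P.eval z‖ ≤ M * ‖z‖ ^ n := by
  set Q := Polynomial.reflect n P with hQ
  have key : ∀ x : ℂ, x ≠ 0 → Q.eval x⁻¹ * x ^ n = P.eval x := by
    intro x hx
    have : Invertible x := invertibleOfNonzero hx
    have h := Polynomial.eval₂_reflect_mul_pow (RingHom.id ℂ) x n P hP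
    rw [invOf_eq_inv] at h
    exact h
  have hQcirc : ∀ w : ℂ, ‖w‖ = 1 → ‖Q.eval w‖ ≤ M := by
    intro w hw
    have hw0 : w ≠ 0 := by intro h; rw [h] at hw; simp at hw
    have hwi : w⁻¹ ≠ 0 := inv_ne_zero hw0
    have h := key w⁻¹ hwi
    rw [inv_inv] at h
    have hnorm : ‖Q.eval w‖ * ‖w⁻¹‖ ^ n = ‖P.eval w⁻¹‖ := by
      rw [← h, norm_mul, norm_pow]
    have hwinv : ‖w⁻¹‖ = 1 := by rw [norm_inv, hw]; norm_num
    rw [hwinv, one_pow, mul_one] at hnorm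
    rw [hnorm]
    exact hM _ (le_of_eq hwinv)
  have hQball := maxmod Q.differentiable hQcirc
  have hz0 : z ≠ 0 := by
    intro h; rw [h] at hz; simp at hz; linarith
  have h := key z hz0
  have hzi : ‖z⁻¹‖ ≤ 1 := by
    rw [norm_inv]
    exact inv_le_one_of_one_le₀ hz
  calc ‖P.eval z‖ = ‖Q.eval z⁻¹‖ * ‖z‖ ^ n := by rw [← h, norm_mul, norm_pow]
    _ ≤ M * ‖z‖ ^ n := by
        apply mul_le_mul_of_nonneg_right _ (by positivity)
        exact hQball _ (by simpa [Metric.mem_closedBall] using hzi)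

private lemma exists_unit_dir (u cc : ℂ) (hu0 : u ≠ 0) :
    ∃ t : ℂ, ‖t‖ = 1 ∧ ‖u‖ ≤ ‖u * t - cc‖ := by
  rcases eq_or_ne cc 0 with h | h
  · exact ⟨1, by simp, by simp [h]⟩
  · have hk : (0:ℝ) < ‖cc‖ := norm_pos_iff.mpr h
    have hs : (0:ℝ) < ‖u‖ := norm_pos_iff.mpr hu0
    have hkC : ((‖cc‖:ℝ) : ℂ) ≠ 0 := by exact_mod_cast hk.ne'
    refine ⟨-(‖u‖ : ℂ) * cc / ((‖cc‖ : ℂ) * u), ?_, ?_⟩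
    · rw [norm_div, norm_mul, norm_mul, norm_neg, Complex.norm_real, Complex.norm_real,
        Real.norm_eq_abs, Real.norm_eq_abs, abs_of_pos hs, abs_of_pos hk]
      rw [div_eq_one_iff_eq (by positivity)]
      ring
    · have heq : u * (-(‖u‖ : ℂ) * cc / ((‖cc‖ : ℂ) * u)) - cc
          = -(((‖u‖ / ‖cc‖ + 1 : ℝ)) : ℂ) * cc := by
        rw [mul_div_assoc', mul_comm ((‖cc‖ : ℂ)) u, mul_div_mul_left _ _ hu0]
        push_cast
        ring
      rw [heq, norm_mul, norm_neg, Complex.norm_real, Real.norm_eq_abs,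
        abs_of_pos (by positivity)]
      rw [add_mul, div_mul_eq_mul_div, mul_div_assoc, div_self hk.ne', mul_one, one_mul]
      linarith

private lemma circle_bound (n : ℕ) (hn : 1 ≤ n) (P : Polynomial ℂ) (hP : P.natDegree ≤ n) {M : ℝ}
    (hMpos : 0 < M) (hM : ∀ w : ℂ, ‖w‖ ≤ 1 → ‖P.eval w‖ ≤ M) {z : ℂ} (hz : ‖z‖ = 1) :
    ‖(Polynomial.derivative P).eval z‖ ≤ n * M := by
  by_contra hcon
  push_neg at hcon
  have hz0 : z ≠ 0 := by intro h; rw [h] at hz; simp at hz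
  have hnpos : (0:ℝ) < n := by exact_mod_cast hn
  set D : ℂ := (Polynomial.derivative P).eval z with hD
  set lam : ℂ := D / ((n : ℂ) * (M:ℂ) * z ^ (n-1)) with hlam
  have hn0 : (n:ℂ) ≠ 0 := by exact_mod_cast (by omega : n ≠ 0)
  have hM0 : (M:ℂ) ≠ 0 := by exact_mod_cast hMpos.ne'
  have hden : ((n:ℂ) * (M:ℂ) * z ^ (n-1)) ≠ 0 :=
    mul_ne_zero (mul_ne_zero hn0 hM0) (pow_ne_zero _ hz0)
  have hlam_norm : 1 < ‖lam‖ := by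
    rw [hlam, norm_div, norm_mul, norm_mul, norm_pow, hz, one_pow, mul_one]
    have h1 : ‖(n:ℂ)‖ = (n:ℝ) := by simp
    have h2 : ‖(M:ℂ)‖ = M := by rw [Complex.norm_real]; exact abs_of_pos hMpos
    rw [h1, h2, lt_div_iff₀ (by positivity)]
    simpa using hcon
  set u : ℂ := lam * M with hu
  have hu_norm : ‖u‖ = ‖lam‖ * M := by
    rw [hu, norm_mul, Complex.norm_real, Real.norm_eq_abs, abs_of_pos hMpos]
  have huM : M < ‖u‖ := by rw [hu_norm]; nlinarith
  have hu0 : u ≠ 0 := by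
    intro h
    rw [h, norm_zero] at huM
    linarith
  set R : Polynomial ℂ := Polynomial.C u * Polynomial.X ^ n - P with hR
  have hdRz : (Polynomial.derivative R).eval z = 0 := by
    have hkey : u * ((n:ℂ) * z ^ (n-1)) = D := by
      rw [hu, hlam]
      field_simp
    rw [hR, Polynomial.derivative_sub, Polynomial.derivative_C_mul, Polynomial.derivative_X_pow]
    simp only [Polynomial.eval_sub, Polynomial.eval_mul, Polynomial.eval_C, Polynomial.eval_pow,
      Polynomial.eval_X, Polynomial.eval_natCast, ← hD]
    rw [← hkey]
    push_cast
    ring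
  have hRroots : ∀ r ∈ R.roots, ‖r‖ < 1 := by
    intro r hr
    by_contra hge
    push_neg at hge
    have hr0 : R.eval r = 0 := Polynomial.isRoot_of_mem_roots hr
    have hPr : P.eval r = u * r ^ n := by
      rw [hR] at hr0
      simp only [Polynomial.eval_sub, Polynomial.eval_mul, Polynomial.eval_C, Polynomial.eval_pow,
        Polynomial.eval_X] at hr0
      linear_combination -hr0
    have h1 : ‖P.eval r‖ ≤ M * ‖r‖ ^ n := growth n P hP hM hge
    rw [hPr, norm_mul, norm_pow] at h1
    have h3 : (1:ℝ) ≤ ‖r‖ ^ n := one_le_pow₀ hge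
    nlinarith
  have hRdeg : 1 ≤ R.natDegree := by
    by_contra hd
    push_neg at hd
    have hc : R = Polynomial.C (R.coeff 0) :=
      Polynomial.eq_C_of_natDegree_le_zero (by omega)
    set cc : ℂ := R.coeff 0 with hccdef
    have hPeq : P = Polynomial.C u * Polynomial.X ^ n - Polynomial.C cc := by
      rw [hR] at hc
      linear_combination -hc
    obtain ⟨t, ht1, ht2⟩ := exists_unit_dir u cc hu0
    obtain ⟨w, hw⟩ := IsAlgClosed.exists_root (Polynomial.X ^ n - Polynomial.C t)
      (by
        rw [Polynomial.degree_X_pow_sub_C (by omega : 0 < n)]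
        exact_mod_cast (by omega : n ≠ 0))
    have hwn : w ^ n = t := by
      simpa [Polynomial.IsRoot, sub_eq_zero] using hw
    have hwnorm : ‖w‖ = 1 := by
      have hpow : ‖w‖ ^ n = 1 := by rw [← norm_pow, hwn, ht1]
      rcases lt_trichotomy ‖w‖ 1 with h | h | h
      · exfalso
        have := pow_lt_one₀ (norm_nonneg w) h (by omega : n ≠ 0)
        linarith
      · exact h
      · exfalso
        have := one_lt_pow₀ h (by omega : n ≠ 0)
        linarith
    have hball := hM w (le_of_eq hwnorm)
    rw [hPeq] at hball
    simp only [Polynomial.eval_sub, Polynomial.eval_mul, Polynomial.eval_C, Polynomial.eval_pow,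
      Polynomial.eval_X] at hball
    rw [hwn] at hball
    linarith
  exact deriv_ne_zero_outside R hRdeg hRroots (le_of_eq hz.symm) hdRz

/-- Bernstein's inequality for complex polynomials: if `deg P ≤ n`, then
`sup_{|z|≤1} |P'(z)| ≤ n · sup_{|z|≤1} |P(z)|`. -/
theorem bernstein_inequality (n : ℕ) (P : Polynomial ℂ) (hP : P.natDegree ≤ n) :
    sSup ((fun z => ‖(Polynomial.derivative P).eval z‖) '' Metric.closedBall (0 : ℂ) 1) ≤
      (n : ℝ) * sSup ((fun z => ‖P.eval z‖) '' Metric.closedBall (0 : ℂ) 1) := by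
  set M := sSup ((fun z => ‖P.eval z‖) '' Metric.closedBall (0 : ℂ) 1) with hMdef
  have hbdd : BddAbove ((fun z => ‖P.eval z‖) '' Metric.closedBall (0 : ℂ) 1) :=
    ((isCompact_closedBall (0:ℂ) 1).image (by continuity)).bddAbove
  have hMub : ∀ w : ℂ, ‖w‖ ≤ 1 → ‖P.eval w‖ ≤ M := by
    intro w hw
    exact le_csSup hbdd ⟨w, by simpa [Metric.mem_closedBall] using hw, rfl⟩
  have hM0 : 0 ≤ M := le_trans (norm_nonneg _) (hMub 0 (by simp))
  have key : ∀ z ∈ closedBall (0:ℂ) 1, ‖(Polynomial.derivative P).eval z‖ ≤ n * M := by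
    rcases Nat.eq_zero_or_pos n with hn | hn
    · subst hn
      intro z _
      rw [Polynomial.eq_C_of_natDegree_le_zero hP]
      simp
    · rcases eq_or_lt_of_le hM0 with hM | hM
      · -- M = 0 : P = 0
        have hP0 : P = 0 := by
          apply Polynomial.eq_zero_of_infinite_isRoot
          apply Set.infinite_of_injective_forall_mem
            (f := fun k : ℕ => (((k:ℂ) + 1)⁻¹ : ℂ))
          · intro a b hab
            simp only at hab
            have : ((a:ℂ) + 1) = ((b:ℂ) + 1) := by
              rw [← inv_inv ((a:ℂ)+1), hab, inv_inv]
            have : (a:ℂ) = b := by linear_combination this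
            exact_mod_cast this
          · intro k
            have hk : (1:ℝ) ≤ ‖((k:ℂ) + 1)‖ := by
              have : ((k:ℂ) + 1) = ((k+1 : ℕ) : ℂ) := by push_cast; ring
              rw [this, Complex.norm_natCast]
              exact_mod_cast Nat.one_le_iff_ne_zero.mpr (Nat.succ_ne_zero k)
            have hmem : ‖(((k:ℂ) + 1)⁻¹ : ℂ)‖ ≤ 1 := by
              rw [norm_inv]
              exact inv_le_one_of_one_le₀ hk
            have := hMub _ hmem
            rw [← hM] at this
            exact norm_le_zero_iff.mp this
        intro z _
        rw [hP0, ← hM]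
        simp
      · exact maxmod (Polynomial.derivative P).differentiable
          (fun w hw => circle_bound n hn P hP hM hMub hw)
  apply Real.sSup_le
  · rintro y ⟨z, hz, rfl⟩
    exact key z hz
  · positivity
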